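/- arXiv:1809.00718 — 3 statements merged into one kernel-verified Lean document; each statement's English description precedes it below -/
import Mathlib

section
/- Let G be a finite abelian group. Then every torsion unit of the integral group ring ℤG is trivial; more precisely, if u is a unit of finite order in ℤG with augmentation 1 (a normalized torsion unit), then u is equal to the image of some element g of G in ℤG. -/
open MonoidAlgebra

/-- The augmentation map of a group ring: the sum of the coefficients. -/
noncomputable def aug (R : Type*) [CommRing R] (G : Type*) [Group G] :
    MonoidAlgebra R G →+* R :=
  MonoidAlgebra.liftNCRingHom (RingHom.id R) 1 (fun _ _ => Commute.one_right _)

/-- The coefficient-wise ring homomorphism between group rings induced by a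
ring homomorphism of the coefficient rings. -/
noncomputable def mapCoeff {R S : Type*} [CommRing R] [CommRing S] (G : Type*) [Group G]
    (f : R →+* S) : MonoidAlgebra R G →+* MonoidAlgebra S G :=
  MonoidAlgebra.liftNCRingHom (MonoidAlgebra.singleOneRingHom.comp f) (MonoidAlgebra.of S G)
    (fun r g => by
      simp [Commute, SemiconjBy, MonoidAlgebra.singleOneRingHom,
        MonoidAlgebra.single_mul_single])

open scoped Classical in
/-- The partial augmentation at `g`: the sum of the coefficients at the
conjugacy class of `g`. -/
noncomputable def partialAug {G : Type*} [Group G] [Fintype G] (g : G)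
    (a : MonoidAlgebra ℤ G) : ℤ :=
  ∑ x ∈ Finset.univ.filter (fun x => IsConj g x), a.coeff x

section HigmanAux

variable {G : Type*} [CommGroup G] [Fintype G]

private lemma higman_expNeZero : NeZero ((Monoid.exponent G : ℂ)) :=
  ⟨by exact_mod_cast @Monoid.exponent_ne_zero_of_finite G _ _⟩

/-- Orthogonality of characters of a finite abelian group. -/
private lemma higman_char_orth [Fintype (G →* ℂˣ)] {a : G} (ha : a ≠ 1) :
    ∑ φ : G →* ℂˣ, ((φ a : ℂˣ) : ℂ) = 0 := by
  have : NeZero ((Monoid.exponent G : ℂ)) := higman_expNeZero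
  obtain ⟨ψ, hψ⟩ := CommGroup.exists_apply_ne_one_of_hasEnoughRootsOfUnity G ℂ ha
  have key : ∑ φ : G →* ℂˣ, (((ψ * φ) a : ℂˣ) : ℂ) = ∑ φ : G →* ℂˣ, ((φ a : ℂˣ) : ℂ) :=
    Fintype.sum_bijective (fun φ => ψ * φ) (Group.mulLeft_bijective ψ) _ _ (fun φ => rfl)
  have key2 : ∑ φ : G →* ℂˣ, (((ψ * φ) a : ℂˣ) : ℂ)
      = (ψ a : ℂ) * ∑ φ : G →* ℂˣ, ((φ a : ℂˣ) : ℂ) := by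
    rw [Finset.mul_sum]
    exact Finset.sum_congr rfl fun φ _ => by simp [MonoidHom.mul_apply]
  have hne : (ψ a : ℂ) - 1 ≠ 0 := by
    intro h
    exact hψ (by ext; simpa using sub_eq_zero.mp h)
  have h0 := key2.symm.trans key
  have h2 : ((ψ a : ℂ) - 1) * ∑ φ : G →* ℂˣ, ((φ a : ℂˣ) : ℂ) = 0 := by
    linear_combination h0
  rcases mul_eq_zero.mp h2 with h | h
  · exact absurd h hne
  · exact h

private lemma higman_charnorm (φ : G →* ℂˣ) (g : G) : ‖((φ g : ℂˣ) : ℂ)‖ = 1 := by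
  refine Complex.norm_eq_one_of_pow_eq_one (n := Fintype.card G) ?_ Fintype.card_ne_zero
  have h1 : φ g ^ Fintype.card G = 1 := by rw [← map_pow, pow_card_eq_one, map_one]
  rw [← Units.val_pow_eq_pow_val, h1, Units.val_one]

/-- Parseval: a normalized torsion unit of `ℤG` has coefficients whose squares sum to 1. -/
private theorem higman_sum_sq_coeff_eq_one (u : (MonoidAlgebra ℤ G)ˣ) (hu : IsOfFinOrder u) :
    ∑ g : G, ((u : MonoidAlgebra ℤ G).coeff g) ^ 2 = 1 := by
  classical
  have : NeZero ((Monoid.exponent G : ℂ)) := higman_expNeZero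
  obtain ⟨e⟩ := CommGroup.monoidHom_mulEquiv_of_hasEnoughRootsOfUnity G ℂ
  letI : Fintype (G →* ℂˣ) := Fintype.ofEquiv G e.toEquiv.symm
  obtain ⟨n, hn, hun⟩ := isOfFinOrder_iff_pow_eq_one.mp hu
  set c : G → ℤ := fun g => (u : MonoidAlgebra ℤ G).coeff g with hc
  set Z : (G →* ℂˣ) → ℂ := fun φ =>
    (MonoidAlgebra.lift ℤ ℂ G) ((Units.coeHom ℂ).comp φ) (u : MonoidAlgebra ℤ G) with hZdef
  have hZ : ∀ φ, Z φ = ∑ g : G, (c g : ℂ) * ((φ g : ℂˣ) : ℂ) := by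
    intro φ
    rw [hZdef]
    simp only
    rw [MonoidAlgebra.lift_apply, Finsupp.sum_fintype]
    · exact Finset.sum_congr rfl fun g _ => by simp [zsmul_eq_mul, hc]
    · intro g; simp
  have hZnorm : ∀ φ, ‖Z φ‖ = 1 := by
    intro φ
    have hval : ((u : MonoidAlgebra ℤ G)) ^ n = 1 := by
      have := congrArg (Units.val) hun
      simpa using this
    have hpow : (Z φ) ^ n = 1 := by
      rw [hZdef]
      simp only
      rw [← map_pow, hval, map_one]
    exact Complex.norm_eq_one_of_pow_eq_one hpow hn.ne'
  have conjZ : ∀ φ, (starRingEnd ℂ) (Z φ)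
      = ∑ h : G, (c h : ℂ) * ((φ h⁻¹ : ℂˣ) : ℂ) := by
    intro φ
    rw [hZ, map_sum]
    refine Finset.sum_congr rfl fun h _ => ?_
    rw [map_mul, map_intCast]
    congr 1
    rw [← Complex.inv_eq_conj (higman_charnorm φ h), map_inv]
    simp
  -- way 1
  have way1 : ∑ φ : G →* ℂˣ, Z φ * (starRingEnd ℂ) (Z φ)
      = (Fintype.card (G →* ℂˣ) : ℂ) := by
    rw [Finset.sum_congr rfl fun φ _ => ?_, Finset.sum_const, Finset.card_univ, nsmul_eq_mul,
      mul_one]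
    rw [← Complex.inv_eq_conj (hZnorm φ), mul_inv_cancel₀]
    intro h0
    have := hZnorm φ
    rw [h0] at this
    simp at this
  -- inner orthogonality sums
  have inner : ∀ g h : G, ∑ φ : G →* ℂˣ, ((φ (g * h⁻¹) : ℂˣ) : ℂ)
      = if g = h then (Fintype.card (G →* ℂˣ) : ℂ) else 0 := by
    intro g h
    by_cases hgh : g = h
    · subst hgh
      simp
    · rw [if_neg hgh]
      exact higman_char_orth (by simp [mul_inv_eq_one, hgh])
  -- way 2
  have way2 : ∑ φ : G →* ℂˣ, Z φ * (starRingEnd ℂ) (Z φ)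
      = (∑ g : G, (c g : ℂ) ^ 2) * (Fintype.card (G →* ℂˣ) : ℂ) := by
    have step1 : ∀ φ : G →* ℂˣ, Z φ * (starRingEnd ℂ) (Z φ)
        = ∑ g : G, ∑ h : G, (c g : ℂ) * (c h : ℂ) * ((φ (g * h⁻¹) : ℂˣ) : ℂ) := by
      intro φ
      rw [conjZ, hZ, Finset.sum_mul_sum]
      refine Finset.sum_congr rfl fun g _ => Finset.sum_congr rfl fun h _ => ?_
      have : ((φ (g * h⁻¹) : ℂˣ) : ℂ) = ((φ g : ℂˣ) : ℂ) * ((φ h⁻¹ : ℂˣ) : ℂ) := by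
        rw [map_mul]; rfl
      rw [this]; ring
    calc ∑ φ : G →* ℂˣ, Z φ * (starRingEnd ℂ) (Z φ)
        = ∑ φ : G →* ℂˣ, ∑ g : G, ∑ h : G,
            (c g : ℂ) * (c h : ℂ) * ((φ (g * h⁻¹) : ℂˣ) : ℂ) :=
          Finset.sum_congr rfl fun φ _ => step1 φ
      _ = ∑ g : G, ∑ h : G, ∑ φ : G →* ℂˣ,
            (c g : ℂ) * (c h : ℂ) * ((φ (g * h⁻¹) : ℂˣ) : ℂ) := by
          rw [Finset.sum_comm]
          refine Finset.sum_congr rfl fun g _ => ?_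
          rw [Finset.sum_comm]
      _ = ∑ g : G, ∑ h : G, (c g : ℂ) * (c h : ℂ) *
            ∑ φ : G →* ℂˣ, ((φ (g * h⁻¹) : ℂˣ) : ℂ) := by
          exact Finset.sum_congr rfl fun g _ => Finset.sum_congr rfl fun h _ =>
            (Finset.mul_sum _ _ _).symm
      _ = (∑ g : G, (c g : ℂ) ^ 2) * (Fintype.card (G →* ℂˣ) : ℂ) := by
          rw [Finset.sum_mul]
          refine Finset.sum_congr rfl fun g _ => ?_
          rw [Finset.sum_congr rfl fun h _ => by rw [inner g h]]
          simp only [mul_ite, mul_zero, Finset.sum_ite_eq, Finset.mem_univ, if_true]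
          ring
  have hcardne : (Fintype.card (G →* ℂˣ) : ℂ) ≠ 0 := by
    exact_mod_cast Fintype.card_ne_zero
  have hC : (∑ g : G, (c g : ℂ) ^ 2) = 1 := by
    have h1 : (1 : ℂ) * (Fintype.card (G →* ℂˣ) : ℂ)
        = (∑ g : G, (c g : ℂ) ^ 2) * (Fintype.card (G →* ℂˣ) : ℂ) := by
      rw [one_mul]; exact way1.symm.trans way2
    exact (mul_right_cancel₀ hcardne h1).symm
  have : ((∑ g : G, (c g) ^ 2 : ℤ) : ℂ) = ((1 : ℤ) : ℂ) := by push_cast; rw [hC]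
  exact_mod_cast this

end HigmanAux

theorem higman_torsion_units_trivial (G : Type*) [CommGroup G] [Fintype G]
    (u : (MonoidAlgebra ℤ G)ˣ) (hu : IsOfFinOrder u)
    (hnorm : aug ℤ G (↑u : MonoidAlgebra ℤ G) = 1) :
    ∃ g : G, (↑u : MonoidAlgebra ℤ G) = MonoidAlgebra.of ℤ G g := by
  classical
  have hsum := higman_sum_sq_coeff_eq_one u hu
  have hex : ∃ g₀ : G, ((u : MonoidAlgebra ℤ G).coeff g₀) ≠ 0 := by
    by_contra h
    push_neg at h
    simp [h] at hsum
  obtain ⟨g₀, hg₀⟩ := hex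
  have h1 : 1 ≤ ((u : MonoidAlgebra ℤ G).coeff g₀) ^ 2 := by
    have := Int.one_le_abs hg₀
    nlinarith [sq_abs ((u : MonoidAlgebra ℤ G).coeff g₀)]
  have hzero : ∀ x : G, x ≠ g₀ → ((u : MonoidAlgebra ℤ G).coeff x) = 0 := by
    intro x hx
    have hsub : ((u : MonoidAlgebra ℤ G).coeff x) ^ 2 + ((u : MonoidAlgebra ℤ G).coeff g₀) ^ 2
        ≤ ∑ g : G, ((u : MonoidAlgebra ℤ G).coeff g) ^ 2 := by
      have hsub0 : ∑ g ∈ ({x, g₀} : Finset G), ((u : MonoidAlgebra ℤ G).coeff g) ^ 2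
          ≤ ∑ g : G, ((u : MonoidAlgebra ℤ G).coeff g) ^ 2 :=
        Finset.sum_le_sum_of_subset_of_nonneg
          (Finset.subset_univ _) (fun g _ _ => sq_nonneg _)
      rwa [Finset.sum_pair hx] at hsub0
    have : ((u : MonoidAlgebra ℤ G).coeff x) ^ 2 ≤ 0 := by linarith
    nlinarith [sq_nonneg ((u : MonoidAlgebra ℤ G).coeff x)]
  have hval : (↑u : MonoidAlgebra ℤ G)
      = MonoidAlgebra.single g₀ ((u : MonoidAlgebra ℤ G).coeff g₀) := by
    ext x
    by_cases hx : x = g₀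
    · subst hx; simp [MonoidAlgebra.single_apply]
    · rw [MonoidAlgebra.single_apply, if_neg (fun h => hx h.symm)]
      exact hzero x hx
  have haug : aug ℤ G (MonoidAlgebra.single g₀ ((u : MonoidAlgebra ℤ G).coeff g₀))
      = (u : MonoidAlgebra ℤ G).coeff g₀ := by
    simp [aug, MonoidAlgebra.liftNCRingHom, MonoidAlgebra.liftNC_single]
  rw [hval] at hnorm ⊢
  rw [haug] at hnorm
  exact ⟨g₀, by rw [hnorm]; rfl⟩
end

section
/- (Berman–Higman) Let G be a finite group and let u be a torsion element of V(ℤG) with u ≠ 1. Then the coefficient of u at the identity element of G is 0. -/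
open MonoidAlgebra

lemma mapCoeff_single {R S : Type*} [CommRing R] [CommRing S] (G : Type*) [Group G]
    (f : R →+* S) (h : G) (r : R) :
    mapCoeff G f (MonoidAlgebra.single h r) = MonoidAlgebra.single h (f r) := by
  simp [mapCoeff, MonoidAlgebra.liftNCRingHom, MonoidAlgebra.liftNC_single,
    MonoidAlgebra.singleOneRingHom, MonoidAlgebra.of_apply, MonoidAlgebra.single_mul_single]

lemma mapCoeff_apply {R S : Type*} [CommRing R] [CommRing S] (G : Type*) [Group G]
    (f : R →+* S) (a : MonoidAlgebra R G) (g : G) :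
    (mapCoeff G f a).coeff g = f (a.coeff g) := by
  induction a using MonoidAlgebra.induction_linear with
  | zero => simp
  | add p q hp hq => rw [map_add, MonoidAlgebra.coeff_add, Finsupp.add_apply, hp, hq, MonoidAlgebra.coeff_add, Finsupp.add_apply, map_add]
  | single h r =>
    classical
    rw [mapCoeff_single]
    simp only [MonoidAlgebra.single_apply, apply_ite f, map_zero]

lemma aug_single (R : Type*) [CommRing R] {G : Type*} [Group G] (g : G) (r : R) :
    aug R G (MonoidAlgebra.single g r) = r := by
  simp [aug, MonoidAlgebra.liftNCRingHom, MonoidAlgebra.liftNC_single]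

lemma multiset_all_eq_one {s : Multiset ℝ} (h1 : ∀ x ∈ s, x ≤ 1)
    (hs : (Multiset.card s : ℝ) ≤ s.sum) : ∀ x ∈ s, x = 1 := by
  intro x hx
  by_contra hne
  obtain ⟨t, rfl⟩ := Multiset.exists_cons_of_mem hx
  have ht : t.sum ≤ Multiset.card t • (1:ℝ) :=
    Multiset.sum_le_card_nsmul t 1 (fun y hy => h1 y (Multiset.mem_cons_of_mem hy))
  have hx1 : x < 1 := lt_of_le_of_ne (h1 x hx) hne
  simp only [Multiset.sum_cons, Multiset.card_cons, nsmul_eq_mul, mul_one] at hs ht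
  push_cast at hs
  linarith

lemma abs_sum_le_card {s : Multiset ℂ} (h : ∀ x ∈ s, ‖x‖ = 1) :
    ‖s.sum‖ ≤ Multiset.card s := by
  induction s using Multiset.induction_on with
  | empty => simp
  | cons a t ih =>
    simp only [Multiset.sum_cons, Multiset.card_cons]
    have h1 := ih (fun x hx => h x (Multiset.mem_cons_of_mem hx))
    calc ‖a + t.sum‖ ≤ ‖a‖ + ‖t.sum‖ := norm_add_le _ _
    _ ≤ 1 + Multiset.card t := by rw [h a (Multiset.mem_cons_self a t)]; linarith
    _ = ((Multiset.card t + 1 : ℕ) : ℝ) := by push_cast; ring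

open Polynomial in
lemma matrix_root_pow_eq_one {G : Type*} [Fintype G] [DecidableEq G]
    (M : Matrix G G ℂ) (n : ℕ) (hn : M ^ n = 1) (ζ : ℂ)
    (hζ : ζ ∈ M.charpoly.roots) : ζ ^ n = 1 := by
  have hr : M.charpoly.IsRoot ζ := (Polynomial.mem_roots (Matrix.charpoly_monic M).ne_zero).mp hζ
  have heval : M.charpoly.eval ζ = ((Matrix.scalar G) ζ - M).det := by
    rw [Matrix.charpoly, eval_det, Matrix.matPolyEquiv_charmatrix]
    simp
  have hdet : ((Matrix.scalar G) ζ - M).det = 0 := by rw [← heval]; exact hr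
  obtain ⟨v, hv0, hv⟩ := (Matrix.exists_mulVec_eq_zero_iff).mpr hdet
  rw [Matrix.sub_mulVec] at hv
  have hscal : ((Matrix.scalar G) ζ).mulVec v = ζ • v := by
    funext i
    simp [Matrix.scalar_apply, Matrix.mulVec_diagonal]
  have hMv : M.mulVec v = ζ • v := by
    have := sub_eq_zero.mp hv
    rw [hscal] at this; exact this.symm
  have key : ∀ k : ℕ, (M ^ k).mulVec v = ζ ^ k • v := by
    intro k; induction k with
    | zero => simp [Matrix.one_mulVec]
    | succ k ih =>
      rw [pow_succ', pow_succ', ← Matrix.mulVec_mulVec, ih, Matrix.mulVec_smul, hMv,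
        smul_smul, mul_comm]
  have hvn := key n
  rw [hn, Matrix.one_mulVec] at hvn
  have : (ζ ^ n - 1) • v = 0 := by rw [sub_smul, one_smul, ← hvn, sub_self]
  rcases smul_eq_zero.mp this with h | h
  · exact sub_eq_zero.mp h
  · exact absurd h hv0


open Polynomial in
theorem berman_higman (G : Type*) [Group G] [Fintype G]
    (u : (MonoidAlgebra ℤ G)ˣ) (hu : IsOfFinOrder u)
    (hnorm : aug ℤ G (↑u : MonoidAlgebra ℤ G) = 1) (hne : u ≠ 1) :
    (↑u : MonoidAlgebra ℤ G).coeff 1 = 0 := by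
  classical
  by_contra h0
  set n := orderOf u with hn
  have hnpos : 0 < n := hu.orderOf_pos
  set a : MonoidAlgebra ℤ G := (↑u : MonoidAlgebra ℤ G) with ha
  let b : Module.Basis G ℂ (MonoidAlgebra ℂ G) := MonoidAlgebra.basis G ℂ
  set U : MonoidAlgebra ℂ G := mapCoeff G (Int.castRingHom ℂ) a with hU
  set M : Matrix G G ℂ := Algebra.leftMulMatrix b U with hMdef
  have hM : ∀ g h : G, M g h = ((a.coeff (g * h⁻¹) : ℤ) : ℂ) := by
    intro g h
    rw [show M g h = _ from Algebra.leftMulMatrix_eq_repr_mul b U g h]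
    have hb : b h = MonoidAlgebra.single h 1 := rfl
    have hrepr : ∀ x : MonoidAlgebra ℂ G, b.repr x g = x.coeff g := fun x => rfl
    rw [hb, hrepr, MonoidAlgebra.mul_single_apply, mul_one, hU, mapCoeff_apply]
    rfl
  have hMn : M ^ n = 1 := by
    have hun : u ^ n = 1 := by rw [hn]; exact pow_orderOf_eq_one u
    have h1 : a ^ n = 1 := by
      rw [ha, ← Units.val_pow_eq_pow_val, hun, Units.val_one]
    rw [hMdef, ← map_pow, ← map_pow, h1, map_one, map_one]
  -- roots facts
  have hsplit : M.charpoly.Splits := IsAlgClosed.splits _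
  have hcard : Multiset.card M.charpoly.roots = Fintype.card G := by
    rw [(Polynomial.splits_iff_card_roots).mp hsplit, Matrix.charpoly_natDegree_eq_dim]
  have habs1 : ∀ ζ ∈ M.charpoly.roots, ‖ζ‖ = 1 := by
    intro ζ hζ
    have hpow := matrix_root_pow_eq_one M n hMn ζ hζ
    have habs : ‖ζ‖ ^ n = 1 := by rw [← norm_pow, hpow, norm_one]
    rcases (pow_eq_one_iff_of_ne_zero hnpos.ne').mp habs with h | ⟨h, _⟩
    · exact h
    · nlinarith [norm_nonneg ζ]
  -- trace
  have htrace : M.trace = (Fintype.card G : ℂ) * ((a.coeff 1 : ℤ) : ℂ) := by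
    have : ∀ g : G, M g g = ((a.coeff 1 : ℤ) : ℂ) := by
      intro g; rw [hM g g, mul_inv_cancel]
    simp only [Matrix.trace, Matrix.diag]
    rw [Finset.sum_congr rfl (fun g _ => this g)]
    simp [mul_comm]
  have hsum : M.charpoly.roots.sum = (Fintype.card G : ℂ) * ((a.coeff 1 : ℤ) : ℂ) := by
    rw [← Matrix.trace_eq_sum_roots_charpoly, htrace]
  -- |a 1| ≤ 1
  have hbound := abs_sum_le_card habs1
  rw [hsum, hcard] at hbound
  have hcardpos : 0 < Fintype.card G := Fintype.card_pos
  have habsa : |(a.coeff 1 : ℤ)| ≤ 1 := by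
    have h1 : ‖(Fintype.card G : ℂ) * ((a.coeff 1 : ℤ) : ℂ)‖
        = (Fintype.card G : ℝ) * ‖((a.coeff 1 : ℤ) : ℂ)‖ := by
      rw [norm_mul, Complex.norm_natCast]
    rw [h1] at hbound
    have h2 : ‖((a.coeff 1 : ℤ) : ℂ)‖ ≤ 1 := by
      have : (0:ℝ) < (Fintype.card G : ℝ) := by exact_mod_cast hcardpos
      nlinarith
    rw [Complex.norm_intCast] at h2
    exact_mod_cast h2
  have hs : a.coeff 1 = 1 ∨ a.coeff 1 = -1 := by
    rcases abs_le.mp habsa with ⟨h1, h2⟩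
    omega
  set s : ℤ := a.coeff 1 with hsdef
  have hs2 : ((s : ℂ)) * ((s : ℂ)) = 1 := by
    rcases hs with h | h <;> rw [h] <;> norm_num
  -- all roots equal s
  have hall : ∀ ζ ∈ M.charpoly.roots, ζ = (s : ℂ) := by
    have hre : ∀ x ∈ M.charpoly.roots.map (fun ζ => ((s:ℂ) * ζ).re), x = 1 := by
      apply multiset_all_eq_one
      · intro x hx
        obtain ⟨ζ, hζ, rfl⟩ := Multiset.mem_map.mp hx
        calc ((s:ℂ) * ζ).re ≤ ‖(s:ℂ)*ζ‖ := Complex.re_le_norm _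
        _ = 1 := by
          rw [norm_mul, habs1 ζ hζ, mul_one, Complex.norm_intCast]
          rcases hs with h | h <;> rw [h] <;> norm_num
      · have hsum2 : (M.charpoly.roots.map (fun ζ => ((s:ℂ) * ζ).re)).sum
            = (Fintype.card G : ℝ) := by
          have e1 : ∀ t : Multiset ℂ, (t.map (fun ζ => ((s:ℂ) * ζ).re)).sum
              = ((t.map (fun ζ => (s:ℂ) * ζ)).sum).re := by
            intro t
            induction t using Multiset.induction_on with
            | empty => simp
            | cons c t ih =>
                simp only [Multiset.map_cons, Multiset.sum_cons, Complex.add_re, ih]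
          have e2 : (M.charpoly.roots.map (fun ζ => (s:ℂ) * ζ)).sum
              = (s:ℂ) * M.charpoly.roots.sum := by
            have := Multiset.sum_map_mul_left (s := M.charpoly.roots)
              (a := (s:ℂ)) (f := fun x => x)
            simpa using this
          rw [e1 _, e2, hsum]
          have e3 : (s:ℂ) * ((Fintype.card G : ℂ) * (s:ℂ)) = (Fintype.card G : ℂ) := by
            calc (s:ℂ) * ((Fintype.card G : ℂ) * (s:ℂ))
                = (Fintype.card G : ℂ) * ((s:ℂ) * (s:ℂ)) := by ring
            _ = (Fintype.card G : ℂ) := by rw [hs2, mul_one]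
          rw [e3]
          simp
        rw [Multiset.card_map, hcard, hsum2]
    intro ζ hζ
    have h1 : ((s:ℂ) * ζ).re = 1 := hre _ (Multiset.mem_map_of_mem _ hζ)
    have h2 : ‖(s:ℂ)*ζ‖ = 1 := by
      rw [norm_mul, habs1 ζ hζ, mul_one, Complex.norm_intCast]
      rcases hs with h | h <;> rw [h] <;> norm_num
    have him : ((s:ℂ) * ζ).im = 0 := by
      have hsq := Complex.sq_norm ((s:ℂ)*ζ)
      rw [h2] at hsq
      rw [Complex.normSq_apply, h1] at hsq
      nlinarith [sq_nonneg (((s:ℂ))*ζ).im]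
    have hsζ : (s:ℂ) * ζ = 1 := Complex.ext (by rw [h1]; rfl) (by rw [him]; rfl)
    calc ζ = ((s:ℂ) * (s:ℂ)) * ζ := by rw [hs2, one_mul]
    _ = (s:ℂ) * ((s:ℂ) * ζ) := by ring
    _ = (s:ℂ) := by rw [hsζ, mul_one]
  -- minpoly
  have hintM : IsIntegral ℂ M := IsIntegral.of_finite ℂ M
  have hqmonic : (minpoly ℂ M).Monic := minpoly.monic hintM
  have hqdvd : minpoly ℂ M ∣ X ^ n - C (1:ℂ) := by
    apply minpoly.dvd
    simp only [map_sub, map_pow, aeval_X, aeval_C]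
    rw [hMn]
    simp
  have hsepXn : (X ^ n - C (1:ℂ)).Separable := by
    apply Polynomial.separable_X_pow_sub_C
    · exact_mod_cast Nat.cast_ne_zero.mpr hnpos.ne'
    · exact one_ne_zero
  have hqsep : (minpoly ℂ M).Separable := hsepXn.of_dvd hqdvd
  have hqroots : (minpoly ℂ M).roots ≤ M.charpoly.roots :=
    Polynomial.roots.le_of_dvd (Matrix.charpoly_monic M).ne_zero (Matrix.minpoly_dvd_charpoly M)
  have hqall : ∀ ζ ∈ (minpoly ℂ M).roots, ζ = (s:ℂ) :=
    fun ζ hζ => hall ζ (Multiset.mem_of_le hqroots hζ)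
  have hqsplit : (minpoly ℂ M).Splits := IsAlgClosed.splits _
  have hqcard : Multiset.card (minpoly ℂ M).roots = (minpoly ℂ M).natDegree :=
    (Polynomial.splits_iff_card_roots).mp hqsplit
  have hdegpos : 0 < (minpoly ℂ M).natDegree := minpoly.natDegree_pos hintM
  have hnodup : (minpoly ℂ M).roots.Nodup := Polynomial.nodup_roots hqsep
  have hrep : (minpoly ℂ M).roots = Multiset.replicate (minpoly ℂ M).natDegree ((s:ℂ)) := by
    rw [← hqcard]
    exact Multiset.eq_replicate_card.mpr hqall
  have hdeg1 : (minpoly ℂ M).natDegree = 1 := by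
    have h := hnodup
    rw [hrep] at h
    have hc := Multiset.nodup_iff_count_le_one.mp h (s:ℂ)
    rw [Multiset.count_replicate_self] at hc
    omega
  have hqeq : minpoly ℂ M = X - C (s:ℂ) := by
    have h := hqsplit.eq_prod_roots_of_monic hqmonic
    rw [hrep, hdeg1] at h
    simpa using h
  have hMeq : M = (s:ℂ) • 1 := by
    have h := minpoly.aeval ℂ M
    rw [hqeq] at h
    simp only [map_sub, aeval_X, aeval_C] at h
    have : M = algebraMap ℂ (Matrix G G ℂ) (s:ℂ) := by
      rwa [sub_eq_zero] at h
    rw [this, Algebra.algebraMap_eq_smul_one]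
  -- conclude
  have hcoeff : ∀ g : G, g ≠ 1 → a.coeff g = 0 := by
    intro g hg
    have h1 : M g 1 = ((a.coeff g : ℤ) : ℂ) := by rw [hM]; simp
    have h2 : M g 1 = 0 := by
      rw [hMeq]
      simp [Matrix.one_apply, hg]
    rw [h1] at h2
    exact_mod_cast h2
  have huval : a = MonoidAlgebra.single 1 s := by
    ext g
    by_cases hg : g = 1
    · subst hg
      simp [MonoidAlgebra.single_apply, hsdef]
    · rw [hcoeff g hg, MonoidAlgebra.single_apply, if_neg (fun h => hg h.symm)]
  have hs1 : s = 1 := by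
    have := hnorm
    rw [huval, aug_single] at this
    exact this
  apply hne
  have hfin : a = (1 : MonoidAlgebra ℤ G) := by
    rw [huval, hs1]
    exact (MonoidAlgebra.one_def).symm
  exact Units.ext (by rw [Units.val_one]; exact ha.symm.trans hfin)
end

section
/- (Coleman Lemma) Let p be a prime, let R be a commutative ring in which p is not invertible, let G be a finite group, and let H be a p-subgroup of G. Then the normalizer of the image of H in the unit group of RG is generated by the image of N_G(H) and the centralizer of the image of H in the unit group of RG; that is, every unit u of RG with u⁻¹(image of H)u = image of H can be written as u = n·c where n is the image in RG of an element of N_G(H) and c is a unit of RG commuting with the image of every element of H. -/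
open MonoidAlgebra

lemma aug_apply_eq_sum {R : Type*} [CommRing R] {G : Type*} [Group G] [Fintype G]
    (a : MonoidAlgebra R G) : aug R G a = ∑ g, a.coeff g := by
  classical
  have h1 : ∀ (g : G) (r : R), aug R G (MonoidAlgebra.single g r) = r := fun g r => by
    simp [aug, MonoidAlgebra.liftNCRingHom, MonoidAlgebra.liftNC_single]
  conv_lhs => rw [← MonoidAlgebra.sum_coeff_single a]
  rw [Finsupp.sum, map_sum]
  simp only [h1]
  exact Finset.sum_subset (Finset.subset_univ _)
    (fun x _ hx => Finsupp.notMem_support_iff.mp hx)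

lemma coleman_aux {p : ℕ} [Fact p.Prime] {R : Type*} [CommRing R]
    (hp : ¬ IsUnit (p : R)) {P : Type*} [Group P] {α : Type*} [Fintype α]
    [MulAction P α] (hP : IsPGroup p P) (f : α → R)
    (hf : ∀ (σ : P) (x : α), f (σ • x) = f x) (hunit : IsUnit (∑ x, f x)) :
    ∃ x : α, ∀ σ : P, σ • x = x := by
  classical
  by_contra hc
  push_neg at hc
  have key : ∀ ω : Quotient (MulAction.orbitRel P α), ∃ r : R,
      ∑ x ∈ Finset.univ.filter (fun x => Quotient.mk'' x = ω), f x = (p : R) * r := by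
    intro ω
    refine Quotient.inductionOn' ω ?_
    intro a
    obtain ⟨k, hk⟩ := hP.card_orbit a
    have hk0 : k ≠ 0 := by
      intro h0
      rw [h0, pow_zero, Nat.card_eq_fintype_card] at hk
      have hfix : a ∈ MulAction.fixedPoints P α :=
        MulAction.mem_fixedPoints_iff_card_orbit_eq_one.mpr hk
      obtain ⟨σ, hσ⟩ := hc a
      exact hσ (hfix σ)
    have hset : Finset.univ.filter (fun x => (Quotient.mk'' x : Quotient (MulAction.orbitRel P α)) = Quotient.mk'' a)
        = (MulAction.orbit P a).toFinset := by
      ext x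
      simp [Quotient.eq'', MulAction.orbitRel_apply]
    have hval : ∀ x ∈ (MulAction.orbit P a).toFinset, f x = f a := by
      intro x hx
      rw [Set.mem_toFinset] at hx
      obtain ⟨σ, rfl⟩ := hx
      exact hf σ a
    rw [hset, Finset.sum_congr rfl hval, Finset.sum_const, Set.toFinset_card]
    have hcard : Fintype.card (MulAction.orbit P a) = p ^ k := by
      rw [← Nat.card_eq_fintype_card]; exact hk
    obtain ⟨k', rfl⟩ : ∃ k', k = k' + 1 :=
      ⟨k - 1, (Nat.succ_pred_eq_of_pos (Nat.pos_of_ne_zero hk0)).symm⟩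
    refine ⟨(p : R) ^ k' * f a, ?_⟩
    rw [hcard, nsmul_eq_mul]
    push_cast
    ring
  choose r hr using key
  have hsum : ∑ x, f x = (p : R) * ∑ ω, r ω := by
    rw [← Finset.sum_fiberwise Finset.univ (fun x => (Quotient.mk'' x : Quotient (MulAction.orbitRel P α))) f]
    simp_rw [hr]
    rw [← Finset.mul_sum]
  rw [hsum] at hunit
  exact hp (isUnit_of_mul_isUnit_left hunit)

theorem coleman_lemma (p : ℕ) [Fact p.Prime] (R : Type*) [CommRing R]
    (hp : ¬ IsUnit (p : R)) (G : Type*) [Group G] [Fintype G]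
    (H : Subgroup G) (hH : IsPGroup p H)
    (u : (MonoidAlgebra R G)ˣ)
    (hu : (fun x => (↑u⁻¹ : MonoidAlgebra R G) * x * ↑u) ''
          (MonoidAlgebra.of R G '' (H : Set G)) = MonoidAlgebra.of R G '' (H : Set G)) :
    ∃ n ∈ Subgroup.normalizer (H : Set G), ∃ c : (MonoidAlgebra R G)ˣ,
      (∀ h ∈ H, Commute (↑c : MonoidAlgebra R G) (MonoidAlgebra.of R G h)) ∧
      (↑u : MonoidAlgebra R G) = MonoidAlgebra.of R G n * ↑c := by
  classical
  haveI : Nontrivial R := by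
    rcases subsingleton_or_nontrivial R with h | h
    · exact absurd (isUnit_of_subsingleton _) hp
    · exact h
  have hof : Function.Injective (MonoidAlgebra.of R G) := MonoidAlgebra.of_injective
  have key : ∀ h : H, ∃ k : G, k ∈ H ∧
      (↑u⁻¹ : MonoidAlgebra R G) * MonoidAlgebra.of R G ↑h * ↑u = MonoidAlgebra.of R G k := by
    intro h
    have hmem : (↑u⁻¹ : MonoidAlgebra R G) * MonoidAlgebra.of R G ↑h * ↑u ∈
        (MonoidAlgebra.of R G '' (H : Set G)) := by
      rw [← hu]
      exact ⟨_, ⟨↑h, h.2, rfl⟩, rfl⟩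
    obtain ⟨k, hk, hke⟩ := hmem
    exact ⟨k, hk, hke.symm⟩
  choose φ hφH hφe using key
  -- φ is multiplicative
  have hmove : ∀ h : H, MonoidAlgebra.of R G ↑h * ↑u = (↑u : MonoidAlgebra R G) * MonoidAlgebra.of R G (φ h) := by
    intro h
    rw [← hφe h]
    simp [mul_assoc]
  have hφ1 : φ 1 = 1 := by
    apply hof
    rw [← hφe 1]
    simp [← MonoidAlgebra.one_def]
  have hφm : ∀ a b : H, φ (a * b) = φ a * φ b := by
    intro a b
    apply hof
    rw [map_mul, ← hφe a, ← hφe b, ← hφe (a * b)]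
    push_cast
    rw [map_mul]
    simp only [mul_assoc, Units.mul_inv_cancel_left, Units.inv_mul_cancel_left]
  -- coefficient invariance
  have hcoef : ∀ (h : H) (g : G),
      (↑u : MonoidAlgebra R G).coeff (↑h * g * (φ h)⁻¹) = (↑u : MonoidAlgebra R G).coeff g := by
    intro h g
    have e2 := congrArg (fun v : MonoidAlgebra R G => v.coeff (↑h * g)) (hmove h)
    simp only [MonoidAlgebra.of_apply, MonoidAlgebra.coeff_single_mul_apply,
      MonoidAlgebra.coeff_mul_single_apply, one_mul, mul_one, inv_mul_cancel_left] at e2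
    exact e2.symm
  -- permutation representation
  obtain ⟨ρ, hρ⟩ : ∃ ρ : H →* Equiv.Perm G, ∀ (h : H) (g : G), ρ h g = ↑h * g * (φ h)⁻¹ := by
    refine ⟨{ toFun := fun h => (Equiv.mulRight (φ h)⁻¹).trans (Equiv.mulLeft (↑h : G)),
              map_one' := by ext g; simp [hφ1],
              map_mul' := by intro a b; ext g; simp [hφm, mul_assoc] },
            fun h g => (mul_assoc (↑h : G) g (φ h)⁻¹).symm⟩
  have hP : IsPGroup p ρ.range := IsPGroup.of_surjective hH ρ.rangeRestrict ρ.rangeRestrict_surjective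
  have hfs : ∀ (σ : ρ.range) (x : G),
      (↑u : MonoidAlgebra R G).coeff (σ • x) = (↑u : MonoidAlgebra R G).coeff x := by
    rintro ⟨σ, h, rfl⟩ x
    have : (⟨ρ h, h, rfl⟩ : ρ.range) • x = ρ h x := rfl
    rw [this, hρ]
    exact hcoef h x
  have hunit : IsUnit (∑ g, (↑u : MonoidAlgebra R G).coeff g) := by
    have := u.isUnit.map (aug R G)
    rwa [aug_apply_eq_sum] at this
  obtain ⟨g₀, hg₀⟩ := coleman_aux hp hP (fun g => (↑u : MonoidAlgebra R G).coeff g) hfs hunit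
  have hfix : ∀ h : H, ↑h * g₀ * (φ h)⁻¹ = g₀ := by
    intro h
    have := hg₀ ⟨ρ h, h, rfl⟩
    rwa [show (⟨ρ h, h, rfl⟩ : ρ.range) • g₀ = ρ h g₀ from rfl, hρ] at this
  have hφ' : ∀ h : H, φ h = g₀⁻¹ * ↑h * g₀ := by
    intro h
    have h1 : (↑h : G) * g₀ = g₀ * φ h := by
      conv_rhs => rw [← hfix h]
      group
    rw [mul_assoc, eq_inv_mul_iff_mul_eq]
    exact h1.symm
  -- normalizer membership
  have hg₀inv : g₀⁻¹ ∈ Subgroup.normalizer (H : Set G) := by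
    apply Subgroup.mem_normalizer_fintype
    intro n hn
    have := hφH ⟨n, hn⟩
    rw [hφ' ⟨n, hn⟩] at this
    simpa using this
  have hg₀n : g₀ ∈ Subgroup.normalizer (H : Set G) := by
    have := (Subgroup.normalizer (H : Set G)).inv_mem hg₀inv
    rwa [inv_inv] at this
  -- the unit of g₀
  set w : (MonoidAlgebra R G)ˣ := Units.map (MonoidAlgebra.of R G) (toUnits g₀) with hw
  have hwv : (↑w : MonoidAlgebra R G) = MonoidAlgebra.of R G g₀ := rfl
  have hwv' : (↑w⁻¹ : MonoidAlgebra R G) = MonoidAlgebra.of R G g₀⁻¹ := rfl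
  refine ⟨g₀, hg₀n, w⁻¹ * u, ?_, ?_⟩
  · intro h hh
    have hh' : g₀ * h * g₀⁻¹ ∈ H := (Subgroup.mem_normalizer_iff.mp hg₀n h).mp hh
    have e1 : MonoidAlgebra.of R G (g₀ * h * g₀⁻¹) * ↑u
        = (↑u : MonoidAlgebra R G) * MonoidAlgebra.of R G h := by
      have := hmove ⟨g₀ * h * g₀⁻¹, hh'⟩
      rw [hφ' ⟨g₀ * h * g₀⁻¹, hh'⟩] at this
      simpa [mul_assoc] using this
    show (↑(w⁻¹ * u) : MonoidAlgebra R G) * MonoidAlgebra.of R G h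
        = MonoidAlgebra.of R G h * ↑(w⁻¹ * u)
    rw [Units.val_mul, hwv']
    calc MonoidAlgebra.of R G g₀⁻¹ * ↑u * MonoidAlgebra.of R G h
        = MonoidAlgebra.of R G g₀⁻¹ * (MonoidAlgebra.of R G (g₀ * h * g₀⁻¹) * ↑u) := by
          rw [e1, mul_assoc]
      _ = MonoidAlgebra.of R G (g₀⁻¹ * (g₀ * h * g₀⁻¹)) * ↑u := by
          rw [← mul_assoc, ← map_mul]
      _ = MonoidAlgebra.of R G (h * g₀⁻¹) * ↑u := by
          rw [show g₀⁻¹ * (g₀ * h * g₀⁻¹) = h * g₀⁻¹ by group]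
      _ = MonoidAlgebra.of R G h * (MonoidAlgebra.of R G g₀⁻¹ * ↑u) := by
          rw [map_mul, mul_assoc]
  · rw [Units.val_mul, hwv', ← mul_assoc, ← map_mul]
    simp [← MonoidAlgebra.one_def]
end
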